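/- Let f = f(x_1, …, x_n) be a real polynomial of total degree at most r in n variables. Let ε = (ε_1, …, ε_n) be chosen uniformly at random from {−1, 1}^n and set X = f(ε_1, …, ε_n). Then E[X^4] ≤ 2^{6r}·(E[X^2])^2. -/

import Mathlib

open MvPolynomial Finset

noncomputable def ePart (n : ℕ) (f : MvPolynomial (Fin (n+1)) ℝ) : MvPolynomial (Fin n) ℝ :=
  ∑ d ∈ f.support.filter (fun d => d 0 % 2 = 0),
    monomial (Finsupp.equivFunOnFinite.symm fun i => d i.succ) (coeff d f)

noncomputable def oPart (n : ℕ) (f : MvPolynomial (Fin (n+1)) ℝ) : MvPolynomial (Fin n) ℝ :=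
  ∑ d ∈ f.support.filter (fun d => ¬ d 0 % 2 = 0),
    monomial (Finsupp.equivFunOnFinite.symm fun i => d i.succ) (coeff d f)

lemma eval_cons_eq (n : ℕ) (f : MvPolynomial (Fin (n+1)) ℝ) (s : ℝ) (hs : s = 1 ∨ s = -1)
    (x : Fin n → ℝ) :
    eval (Fin.cons s x) f = eval x (ePart n f) + s * eval x (oPart n f) := by
  have hpow : ∀ k : ℕ, s ^ k = if k % 2 = 0 then 1 else s := by
    intro k
    rcases hs with h | h <;> subst h
    · simp
    · rcases Nat.even_or_odd k with hk | hk
      · rw [hk.neg_one_pow, if_pos (Nat.even_iff.mp hk)]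
      · rw [hk.neg_one_pow, if_neg (by simp [Nat.odd_iff.mp hk])]
  conv_lhs => rw [f.as_sum]
  rw [map_sum, ePart, oPart, map_sum, map_sum, Finset.mul_sum,
    ← Finset.sum_filter_add_sum_filter_not f.support (fun d => d 0 % 2 = 0)]
  congr 1
  · refine Finset.sum_congr rfl fun d hd => ?_
    rw [Finset.mem_filter] at hd
    rw [eval_monomial, eval_monomial, Finsupp.prod_pow, Finsupp.prod_pow,
      Fin.prod_univ_succ]
    simp [Fin.cons_zero, Fin.cons_succ, hpow, hd.2]
  · refine Finset.sum_congr rfl fun d hd => ?_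
    rw [Finset.mem_filter] at hd
    rw [eval_monomial, eval_monomial, Finsupp.prod_pow, Finsupp.prod_pow,
      Fin.prod_univ_succ]
    simp only [Fin.cons_zero, Fin.cons_succ, hpow, hd.2, if_false,
      Finsupp.coe_equivFunOnFinite_symm]
    ring

lemma part_sum_le (n : ℕ) (d : Fin (n+1) →₀ ℕ) :
    ((Finsupp.equivFunOnFinite.symm fun i => d i.succ : Fin n →₀ ℕ).sum fun _ e => e) + d 0
      = d.sum fun _ e => e := by
  rw [Finsupp.sum_fintype _ _ (fun _ => rfl), Finsupp.sum_fintype _ _ (fun _ => rfl),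
    Fin.sum_univ_succ]
  simp [Finsupp.coe_equivFunOnFinite_symm]
  ring

lemma ePart_deg (n r : ℕ) (f : MvPolynomial (Fin (n+1)) ℝ) (hf : f.totalDegree ≤ r) :
    (ePart n f).totalDegree ≤ r := by
  refine totalDegree_finsetSum_le fun d hd => ?_
  refine le_trans (totalDegree_monomial_le _ _) ?_
  rw [Finset.mem_filter] at hd
  have h1 := part_sum_le n d
  have h2 := le_totalDegree hd.1
  simp only [Function.id_def] at *
  omega

lemma oPart_deg (n r : ℕ) (f : MvPolynomial (Fin (n+1)) ℝ) (hf : f.totalDegree ≤ r + 1) :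
    (oPart n f).totalDegree ≤ r := by
  refine totalDegree_finsetSum_le fun d hd => ?_
  refine le_trans (totalDegree_monomial_le _ _) ?_
  rw [Finset.mem_filter] at hd
  have h1 := part_sum_le n d
  have h2 := le_totalDegree hd.1
  have h3 : d 0 % 2 ≠ 0 := hd.2
  simp only [Function.id_def] at *
  omega

lemma oPart_zero (n : ℕ) (f : MvPolynomial (Fin (n+1)) ℝ) (hf : f.totalDegree ≤ 0) :
    oPart n f = 0 := by
  refine Finset.sum_eq_zero fun d hd => ?_
  rw [Finset.mem_filter] at hd
  exfalso
  have h1 := part_sum_le n d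
  have h2 := le_totalDegree hd.1
  have h3 : d 0 % 2 ≠ 0 := hd.2
  omega

lemma sum_split (n : ℕ) (F : (Fin (n+1) → Bool) → ℝ) :
    ∑ ε : Fin (n+1) → Bool, F ε
      = ∑ ε : Fin n → Bool, (F (Fin.cons true ε) + F (Fin.cons false ε)) := by
  rw [← (Fin.consEquiv (fun _ => Bool)).sum_comp F, Fintype.sum_prod_type, Fintype.sum_bool]
  rw [← Finset.sum_add_distrib]
  rfl

lemma cons_pt (n : ℕ) (b : Bool) (ε : Fin n → Bool) :
    (fun i => if (Fin.cons b ε : Fin (n+1) → Bool) i then (1:ℝ) else -1)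
      = Fin.cons (if b then (1:ℝ) else -1) (fun i => if ε i then (1:ℝ) else -1) := by
  funext i
  induction i using Fin.cases <;> simp

lemma sqrt_bound (t c : ℝ) (ht : 0 ≤ t) (hc : 0 ≤ c) (h : t ^ 2 ≤ c ^ 2) : t ≤ c := by
  nlinarith

theorem aux_hyper (n : ℕ) : ∀ (r : ℕ) (f : MvPolynomial (Fin n) ℝ), f.totalDegree ≤ r →
    2 ^ n * ∑ ε : Fin n → Bool, (eval (fun i => if ε i then (1:ℝ) else -1) f) ^ 4 ≤
      64 ^ r * (∑ ε : Fin n → Bool, (eval (fun i => if ε i then (1:ℝ) else -1) f) ^ 2) ^ 2 := by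
  induction n with
  | zero =>
    intro r f _
    rw [Fintype.sum_unique, Fintype.sum_unique]
    have h1 : (1:ℝ) ≤ 64 ^ r := one_le_pow₀ (by norm_num)
    set c := eval (fun i => if (default : Fin 0 → Bool) i then (1:ℝ) else -1) f
    nlinarith [sq_nonneg c, sq_nonneg (c^2)]
  | succ n ih =>
    intro r f hf
    set G : (Fin n → Bool) → ℝ := fun ε => eval (fun i => if ε i then (1:ℝ) else -1) (ePart n f) with hG
    set H : (Fin n → Bool) → ℝ := fun ε => eval (fun i => if ε i then (1:ℝ) else -1) (oPart n f) with hH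
    have heval : ∀ (b : Bool) (ε : Fin n → Bool),
        eval (fun i => if (Fin.cons b ε : Fin (n+1) → Bool) i then (1:ℝ) else -1) f
          = G ε + (if b then (1:ℝ) else -1) * H ε := by
      intro b ε
      rw [cons_pt, eval_cons_eq n f _ (by cases b <;> simp)]
    have h4 : ∑ ε : Fin (n+1) → Bool, (eval (fun i => if ε i then (1:ℝ) else -1) f) ^ 4
        = ∑ ε : Fin n → Bool, (2 * G ε ^ 4 + 12 * G ε ^ 2 * H ε ^ 2 + 2 * H ε ^ 4) := by
      rw [sum_split n]
      refine Finset.sum_congr rfl fun ε _ => ?_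
      rw [heval true ε, heval false ε]
      simp
      ring
    have h2 : ∑ ε : Fin (n+1) → Bool, (eval (fun i => if ε i then (1:ℝ) else -1) f) ^ 2
        = ∑ ε : Fin n → Bool, (2 * G ε ^ 2 + 2 * H ε ^ 2) := by
      rw [sum_split n]
      refine Finset.sum_congr rfl fun ε _ => ?_
      rw [heval true ε, heval false ε]
      simp
      ring
    rw [h4, h2]
    set P := ∑ ε : Fin n → Bool, G ε ^ 4 with hP
    set Q := ∑ ε : Fin n → Bool, H ε ^ 4 with hQ
    set T := ∑ ε : Fin n → Bool, G ε ^ 2 * H ε ^ 2 with hT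
    set A := ∑ ε : Fin n → Bool, G ε ^ 2 with hA
    set B := ∑ ε : Fin n → Bool, H ε ^ 2 with hB
    have hsum4 : ∑ ε : Fin n → Bool, (2 * G ε ^ 4 + 12 * G ε ^ 2 * H ε ^ 2 + 2 * H ε ^ 4)
        = 2 * P + 12 * T + 2 * Q := by
      rw [hP, hQ, hT, Finset.mul_sum, Finset.mul_sum, Finset.mul_sum,
        ← Finset.sum_add_distrib, ← Finset.sum_add_distrib]
      refine Finset.sum_congr rfl fun ε _ => by ring
    have hsum2 : ∑ ε : Fin n → Bool, (2 * G ε ^ 2 + 2 * H ε ^ 2) = 2 * A + 2 * B := by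
      rw [hA, hB, Finset.sum_add_distrib, ← Finset.mul_sum, ← Finset.mul_sum]
    rw [hsum4, hsum2]
    have hAnn : 0 ≤ A := Finset.sum_nonneg fun ε _ => by positivity
    have hBnn : 0 ≤ B := Finset.sum_nonneg fun ε _ => by positivity
    have hPnn : 0 ≤ P := Finset.sum_nonneg fun ε _ => by positivity
    have hQnn : 0 ≤ Q := Finset.sum_nonneg fun ε _ => by positivity
    have hTnn : 0 ≤ T := Finset.sum_nonneg fun ε _ => by positivity
    have hCS : T ^ 2 ≤ P * Q := by
      rw [hT, hP, hQ]
      have : (∑ i, G i ^ 2 * H i ^ 2) ^ 2 ≤ (∑ i, (G i ^ 2) ^ 2) * ∑ i, (H i ^ 2) ^ 2 := Finset.sum_mul_sq_le_sq_mul_sq Finset.univ (fun ε => G ε ^ 2) (fun ε => H ε ^ 2)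
      convert this using 3 <;> ring
    have h2n : (0:ℝ) < 2 ^ n := by positivity
    rcases r with _ | r'
    · -- r = 0 : oPart = 0
      have hO : oPart n f = 0 := oPart_zero n f hf
      have hHz : ∀ ε, H ε = 0 := by intro ε; rw [hH]; simp [hO]
      have hBz : B = 0 := by rw [hB]; exact Finset.sum_eq_zero fun ε _ => by rw [hHz]; ring
      have hQz : Q = 0 := by rw [hQ]; exact Finset.sum_eq_zero fun ε _ => by rw [hHz]; ring
      have hTz : T = 0 := by rw [hT]; exact Finset.sum_eq_zero fun ε _ => by rw [hHz]; ring
      have ihg : 2 ^ n * P ≤ 64 ^ 0 * A ^ 2 := ih 0 (ePart n f) (ePart_deg n 0 f hf)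
      clear_value G H P Q T A B
      clear heval h4 h2 hsum4 hsum2 hHz hO ih hf
      rw [hBz, hQz, hTz]
      simp only [pow_zero, one_mul] at ihg ⊢
      rw [pow_succ]
      nlinarith
    · -- r = r' + 1
      have ihg : 2 ^ n * P ≤ 64 ^ (r' + 1) * A ^ 2 := ih (r' + 1) (ePart n f) (ePart_deg n (r'+1) f hf)
      have ihh : 2 ^ n * Q ≤ 64 ^ r' * B ^ 2 := ih r' (oPart n f) (oPart_deg n r' f hf)
      clear_value G H P Q T A B
      clear heval h4 h2 hsum4 hsum2 ih hf
      have hTbound : 2 ^ n * T ≤ 8 * 64 ^ r' * (A * B) := by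
        refine sqrt_bound _ _ (mul_nonneg h2n.le hTnn)
          (mul_nonneg (by positivity) (mul_nonneg hAnn hBnn)) ?_
        have h0 : (2 ^ n * T) ^ 2 ≤ (2 ^ n * P) * (2 ^ n * Q) := by
          have hx := mul_le_mul_of_nonneg_left hCS (sq_nonneg ((2:ℝ) ^ n))
          calc (2 ^ n * T) ^ 2 = ((2:ℝ) ^ n) ^ 2 * T ^ 2 := by ring
            _ ≤ ((2:ℝ) ^ n) ^ 2 * (P * Q) := hx
            _ = (2 ^ n * P) * (2 ^ n * Q) := by ring
        calc (2 ^ n * T) ^ 2 ≤ (2 ^ n * P) * (2 ^ n * Q) := h0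
          _ ≤ (64 ^ (r'+1) * A ^ 2) * (64 ^ r' * B ^ 2) := by
              apply mul_le_mul ihg ihh (mul_nonneg h2n.le hQnn)
                (mul_nonneg (by positivity) (sq_nonneg A))
          _ = (8 * 64 ^ r' * (A * B)) ^ 2 := by rw [pow_succ]; ring
      have hK : (64:ℝ) ^ (r'+1) = 64 * 64 ^ r' := by rw [pow_succ]; ring
      rw [pow_succ]
      nlinarith [mul_nonneg hAnn hBnn, mul_nonneg (mul_nonneg hAnn hAnn) (pow_nonneg (by norm_num : (0:ℝ) ≤ 64) r'), mul_nonneg (mul_nonneg hBnn hBnn) (pow_nonneg (by norm_num : (0:ℝ) ≤ 64) r')]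

theorem bourgain_hypercontractivity
    (n r : ℕ) (f : MvPolynomial (Fin n) ℝ) (hf : f.totalDegree ≤ r) :
    (∑ ε : Fin n → Bool,
        (MvPolynomial.eval (fun i => if ε i then (1 : ℝ) else -1) f) ^ 4) / 2 ^ n ≤
      2 ^ (6 * r) *
        ((∑ ε : Fin n → Bool,
            (MvPolynomial.eval (fun i => if ε i then (1 : ℝ) else -1) f) ^ 2) / 2 ^ n) ^ 2 := by
  have h := aux_hyper n r f hf
  have h2n : (0:ℝ) < 2 ^ n := by positivity
  have hK : (2:ℝ) ^ (6 * r) = 64 ^ r := by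
    rw [pow_mul]; norm_num
  rw [hK, div_pow, ← mul_div_assoc, div_le_div_iff₀ h2n (by positivity)]
  calc (∑ ε : Fin n → Bool, (MvPolynomial.eval (fun i => if ε i then (1 : ℝ) else -1) f) ^ 4) * (2^n)^2
      = (2^n * ∑ ε : Fin n → Bool, (MvPolynomial.eval (fun i => if ε i then (1 : ℝ) else -1) f) ^ 4) * 2^n := by ring
    _ ≤ (64 ^ r * (∑ ε : Fin n → Bool, (MvPolynomial.eval (fun i => if ε i then (1 : ℝ) else -1) f) ^ 2) ^ 2) * 2^n := by
        exact mul_le_mul_of_nonneg_right h (le_of_lt h2n)
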